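/- Let f ≥ 3 be an integer, m ≥ 1 a divisor of f, and H a subgroup of (ℤ/mℤ)ˣ. Let ρ : ℚ[(ℤ/fℤ)ˣ] → ℚ[((ℤ/mℤ)ˣ)/H] be the ℚ-algebra homomorphism induced by the composite group surjection (ℤ/fℤ)ˣ → (ℤ/mℤ)ˣ → ((ℤ/mℤ)ˣ)/H. If either (a) there exists a prime ℓ dividing f, not dividing m, whose class in (ℤ/mℤ)ˣ belongs to H, or (b) the class of −1 in (ℤ/mℤ)ˣ belongs to H, then ρ(S_f) = 0. -/

import Mathlib

open scoped BigOperators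

open Finset ArithmeticFunction
open scoped Classical

/-- The Stickelberger element `S_f ∈ ℚ[(ℤ/fℤ)ˣ]`,
`S_f := −Σ_{1≤a≤f, gcd(a,f)=1} (a/f − 1/2)·[ā]⁻¹`. -/
noncomputable def stickelberger (f : ℕ) : MonoidAlgebra ℚ (ZMod f)ˣ :=
  -(∑ a ∈ Finset.Icc 1 f,
      if h : Nat.Coprime a f then
        ((a : ℚ) / f - 1 / 2) • MonoidAlgebra.single ((ZMod.unitOfCoprime a h)⁻¹) (1 : ℚ)
      else 0)

section aux
variable {m : ℕ} (H : Subgroup (ZMod m)ˣ) (g : (ZMod m)ˣ ⧸ H)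

noncomputable def qf (x : ZMod m) : ℚ :=
  if hx : IsUnit x then (if QuotientGroup.mk' H hx.unit⁻¹ = g then 1 else 0) else 0

lemma qf_unit (w : (ZMod m)ˣ) :
    qf H g (↑w) = if QuotientGroup.mk' H w⁻¹ = g then 1 else 0 := by
  have hw : IsUnit (w : ZMod m) := w.isUnit
  have h2 : hw.unit = w := Units.ext hw.unit_spec
  rw [qf, dif_pos hw, h2]

lemma qf_nonunit {x : ZMod m} (hx : ¬ IsUnit x) : qf H g x = 0 := dif_neg hx

lemma qf_mul_mem {w : (ZMod m)ˣ} (hw : w ∈ H) (x : ZMod m) :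
    qf H g ((w : ZMod m) * x) = qf H g x := by
  by_cases hx : IsUnit x
  · obtain ⟨v, rfl⟩ := hx
    have hwv : (w : ZMod m) * (v : ZMod m) = ((w * v : (ZMod m)ˣ) : ZMod m) := rfl
    rw [hwv, qf_unit, qf_unit]
    have h1 : QuotientGroup.mk' H ((w * v)⁻¹) = QuotientGroup.mk' H (v⁻¹) := by
      refine (QuotientGroup.mk'_eq_mk' H).mpr ⟨w, hw, ?_⟩
      rw [mul_inv_rev, inv_mul_cancel_right]
    rw [h1]
  · have hx2 : ¬ IsUnit ((w : ZMod m) * x) := by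
      intro h
      exact hx ((Units.isUnit_units_mul w x).mp h)
    rw [qf_nonunit H g hx, qf_nonunit H g hx2]

end aux

lemma sum_range_cast (k : ℕ) : ∑ j ∈ range k, (j : ℚ) = k * (k - 1) / 2 := by
  induction k with
  | zero => simp
  | succ n ih =>
    rw [Finset.sum_range_succ, ih]
    push_cast
    ring

lemma gauss_piece (m k c : ℕ) (hm : 0 < m) (hk : 0 < k) :
    ∑ j ∈ range k, (((j * m + c : ℕ) : ℚ) / (m * k) - 1 / 2) = (c : ℚ) / m - 1 / 2 := by
  have hm' : (m : ℚ) ≠ 0 := Nat.cast_ne_zero.mpr hm.ne'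
  have hk' : (k : ℚ) ≠ 0 := Nat.cast_ne_zero.mpr hk.ne'
  have h : ∀ j ∈ range k, (((j * m + c : ℕ) : ℚ) / (m * k) - 1 / 2)
      = (j : ℚ) * (m / (m * k)) + ((c : ℚ) / (m * k) - 1 / 2) := by
    intro j _
    push_cast
    ring
  rw [Finset.sum_congr rfl h, Finset.sum_add_distrib, ← Finset.sum_mul, sum_range_cast,
    Finset.sum_const, card_range, nsmul_eq_mul]
  field_simp
  ring

lemma distrib {m : ℕ} (k : ℕ) (hm : 0 < m) (hk : 0 < k) (r : ZMod m → ℚ) :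
    ∑ b ∈ Icc 1 (m * k), (((b : ℕ) : ℚ) / (m * k) - 1 / 2) * r ((b : ℕ) : ZMod m)
      = ∑ c ∈ Icc 1 m, (((c : ℕ) : ℚ) / m - 1 / 2) * r ((c : ℕ) : ZMod m) := by
  have key : ∑ b ∈ Finset.range (m * k), (((b + 1 : ℕ) : ℚ) / (m * k) - 1 / 2) * r ((b + 1 : ℕ) : ZMod m)
      = ∑ p ∈ Finset.range k ×ˢ Finset.range m,
          (((p.1 * m + p.2 + 1 : ℕ) : ℚ) / (m * k) - 1 / 2) * r ((p.1 * m + p.2 + 1 : ℕ) : ZMod m) := by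
    refine Finset.sum_nbij' (fun b => (b / m, b % m)) (fun p => p.1 * m + p.2) ?_ ?_ ?_ ?_ ?_
    · intro b hb
      rw [Finset.mem_range] at hb
      refine Finset.mem_product.mpr ⟨Finset.mem_range.mpr ?_, Finset.mem_range.mpr (Nat.mod_lt _ hm)⟩
      exact Nat.div_lt_iff_lt_mul hm |>.mpr (by rw [mul_comm] at hb; exact hb)
    · intro p hp
      rw [Finset.mem_product, Finset.mem_range, Finset.mem_range] at hp
      rw [Finset.mem_range]
      calc p.1 * m + p.2 < p.1 * m + m := by omega
        _ = (p.1 + 1) * m := by ring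
        _ ≤ k * m := Nat.mul_le_mul_right m hp.1
        _ = m * k := Nat.mul_comm k m
    · intro b _
      exact Nat.div_add_mod' b m
    · intro p hp
      rw [Finset.mem_product, Finset.mem_range, Finset.mem_range] at hp
      have h1 : (p.1 * m + p.2) / m = p.1 := by
        rw [add_comm, mul_comm, Nat.add_mul_div_left _ _ hm, Nat.div_eq_of_lt hp.2, zero_add]
      have h2 : (p.1 * m + p.2) % m = p.2 := by
        rw [add_comm, mul_comm, Nat.add_mul_mod_self_left, Nat.mod_eq_of_lt hp.2]
      exact Prod.ext h1 h2
    · intro b _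
      rw [Nat.div_add_mod' b m]
  rw [← Finset.Ico_add_one_right_eq_Icc, ← Finset.Ico_add_one_right_eq_Icc, Finset.sum_Ico_eq_sum_range,
    Finset.sum_Ico_eq_sum_range]
  simp only [Nat.succ_sub_one, Nat.add_sub_cancel, add_comm 1]
  rw [key, Finset.sum_product, Finset.sum_comm]
  refine Finset.sum_congr rfl (fun c hc => ?_)
  have hcast : ∀ j : ℕ, (((j * m + c + 1 : ℕ)) : ZMod m) = ((c + 1 : ℕ) : ZMod m) := by
    intro j
    push_cast [ZMod.natCast_self]
    ring
  calc ∑ j ∈ range k, (((j * m + c + 1 : ℕ) : ℚ) / (m * k) - 1 / 2) * r (((j * m + c + 1 : ℕ)) : ZMod m)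
      = ∑ j ∈ range k, (((j * m + (c + 1) : ℕ) : ℚ) / (m * k) - 1 / 2) * r (((c + 1 : ℕ)) : ZMod m) := by
        refine Finset.sum_congr rfl (fun j _ => ?_)
        rw [hcast, add_assoc]
    _ = (∑ j ∈ range k, (((j * m + (c + 1) : ℕ) : ℚ) / (m * k) - 1 / 2)) * r (((c + 1 : ℕ)) : ZMod m) := by
        rw [Finset.sum_mul]
    _ = (((c + 1 : ℕ) : ℚ) / m - 1 / 2) * r ((c + 1 : ℕ) : ZMod m) := by
        rw [gauss_piece _ _ _ hm hk]

lemma moebius_indicator (n : ℕ) :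
    ∑ d ∈ n.divisors, ((moebius d : ℤ) : ℚ) = if n = 1 then 1 else 0 := by
  have h2 : (moebius * ArithmeticFunction.zeta : ArithmeticFunction ℤ) n = (1 : ArithmeticFunction ℤ) n := by
    rw [ArithmeticFunction.moebius_mul_coe_zeta]
  rw [ArithmeticFunction.coe_mul_zeta_apply, ArithmeticFunction.one_apply] at h2
  calc ∑ d ∈ n.divisors, ((moebius d : ℤ) : ℚ)
      = ((∑ d ∈ n.divisors, moebius d : ℤ) : ℚ) := by push_cast; rfl
    _ = (((if n = 1 then 1 else 0) : ℤ) : ℚ) := by rw [h2]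
    _ = if n = 1 then 1 else 0 := by split <;> simp

lemma dvd_sum_reindex (f d : ℕ) (hd : d ∣ f) (hd0 : 0 < d) (F : ℕ → ℚ) :
    ∑ a ∈ (Icc 1 f).filter (fun a => d ∣ a), F a = ∑ b ∈ Icc 1 (f / d), F (d * b) := by
  refine Finset.sum_nbij' (fun a => a / d) (fun b => d * b) ?_ ?_ ?_ ?_ ?_
  · intro a ha
    rw [Finset.mem_filter, Finset.mem_Icc] at ha
    obtain ⟨⟨h1, h2⟩, h3⟩ := ha
    rw [Finset.mem_Icc]
    exact ⟨(Nat.one_le_div_iff hd0).mpr (Nat.le_of_dvd (by omega) h3),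
      Nat.div_le_div_right h2⟩
  · intro b hb
    rw [Finset.mem_Icc] at hb
    rw [Finset.mem_filter, Finset.mem_Icc]
    refine ⟨⟨?_, ?_⟩, Dvd.intro b rfl⟩
    · exact Nat.one_le_iff_ne_zero.mpr (Nat.mul_ne_zero hd0.ne' (by omega))
    · calc d * b ≤ d * (f / d) := Nat.mul_le_mul_left d hb.2
        _ = f := Nat.mul_div_cancel' hd
  · intro a ha
    rw [Finset.mem_filter] at ha
    exact Nat.mul_div_cancel' ha.2
  · intro b _
    exact Nat.mul_div_cancel_left b hd0
  · intro a ha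
    rw [Finset.mem_filter] at ha
    rw [Nat.mul_div_cancel' ha.2]

lemma sieve (f : ℕ) (hf : 0 < f) (F : ℕ → ℚ) :
    ∑ a ∈ Icc 1 f, (if Nat.Coprime a f then F a else 0)
      = ∑ d ∈ f.divisors, ((moebius d : ℤ) : ℚ) * ∑ b ∈ Icc 1 (f / d), F (d * b) := by
  have stepA : ∀ a ∈ Icc 1 f, (if Nat.Coprime a f then F a else 0)
      = ∑ d ∈ f.divisors, (if d ∣ a then ((moebius d : ℤ) : ℚ) * F a else 0) := by
    intro a ha
    rw [Finset.mem_Icc] at ha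
    have hsum : ∑ d ∈ f.divisors, (if d ∣ a then ((moebius d : ℤ) : ℚ) else 0)
        = if Nat.Coprime a f then 1 else 0 := by
      rw [← Finset.sum_filter]
      have hset : f.divisors.filter (fun d => d ∣ a) = (Nat.gcd a f).divisors := by
        ext d
        simp only [Finset.mem_filter, Nat.mem_divisors]
        constructor
        · rintro ⟨⟨hdf, hf0⟩, hda⟩
          exact ⟨Nat.dvd_gcd hda hdf, fun h => hf0 ((Nat.gcd_eq_zero_iff.mp h).2)⟩
        · rintro ⟨hdg, _⟩
          exact ⟨⟨hdg.trans (Nat.gcd_dvd_right a f), hf.ne'⟩, hdg.trans (Nat.gcd_dvd_left a f)⟩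
      rw [hset, moebius_indicator]
    calc (if Nat.Coprime a f then F a else 0)
        = (if Nat.Coprime a f then (1 : ℚ) else 0) * F a := by split <;> simp
      _ = (∑ d ∈ f.divisors, (if d ∣ a then ((moebius d : ℤ) : ℚ) else 0)) * F a := by rw [hsum]
      _ = ∑ d ∈ f.divisors, (if d ∣ a then ((moebius d : ℤ) : ℚ) * F a else 0) := by
          rw [Finset.sum_mul]
          exact Finset.sum_congr rfl (fun d _ => by rw [ite_mul, zero_mul])
  rw [Finset.sum_congr rfl stepA, Finset.sum_comm]
  refine Finset.sum_congr rfl (fun d hd => ?_)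
  rw [Nat.mem_divisors] at hd
  have hd0 : 0 < d := Nat.pos_of_dvd_of_pos hd.1 hf
  calc ∑ a ∈ Icc 1 f, (if d ∣ a then ((moebius d : ℤ) : ℚ) * F a else 0)
      = ∑ a ∈ (Icc 1 f).filter (fun a => d ∣ a), ((moebius d : ℤ) : ℚ) * F a := by
        rw [Finset.sum_filter]
    _ = ((moebius d : ℤ) : ℚ) * ∑ a ∈ (Icc 1 f).filter (fun a => d ∣ a), F a := by
        rw [Finset.mul_sum]
    _ = ((moebius d : ℤ) : ℚ) * ∑ b ∈ Icc 1 (f / d), F (d * b) := by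
        rw [dvd_sum_reindex f d hd.1 hd0 F]

theorem statement14 (f m : ℕ) (hf : 3 ≤ f) (hm : 1 ≤ m) (hdvd : m ∣ f)
    (H : Subgroup (ZMod m)ˣ)
    (hcond :
      (∃ ℓ : ℕ, ∃ hℓ : ℓ.Prime, ℓ ∣ f ∧ ∃ hnd : ¬ ℓ ∣ m,
        ZMod.unitOfCoprime ℓ (hℓ.coprime_iff_not_dvd.mpr hnd) ∈ H)
      ∨ (-1 : (ZMod m)ˣ) ∈ H) :
    MonoidAlgebra.mapDomainRingHom ℚ
        ((QuotientGroup.mk' H).comp (ZMod.unitsMap hdvd))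
        (stickelberger f) = 0 := by
  haveI : NeZero m := ⟨by omega⟩
  have hf0 : 0 < f := by omega
  have hfQ : (f : ℚ) ≠ 0 := Nat.cast_ne_zero.mpr hf0.ne'
  set φ := (QuotientGroup.mk' H).comp (ZMod.unitsMap hdvd) with hφ
  rw [stickelberger, map_neg, map_sum, neg_eq_zero]
  ext g
  rw [MonoidAlgebra.coeff_sum, Finset.sum_apply']
  have key : ∀ a ∈ Icc 1 f,
      (MonoidAlgebra.mapDomainRingHom ℚ φ
        (if h : Nat.Coprime a f then
          ((a : ℚ) / f - 1 / 2) • MonoidAlgebra.single ((ZMod.unitOfCoprime a h)⁻¹) (1 : ℚ)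
        else 0)).coeff g
      = (if Nat.Coprime a f then ((a : ℚ) / f - 1 / 2) * qf H g ((a : ℕ) : ZMod m) else 0) := by
    intro a _
    by_cases h : Nat.Coprime a f
    · rw [dif_pos h, if_pos h]
      have ham : Nat.Coprime a m := Nat.Coprime.coprime_dvd_right hdvd h
      have hu : ZMod.unitsMap hdvd (ZMod.unitOfCoprime a h) = ZMod.unitOfCoprime a ham := by
        apply Units.ext
        simp [ZMod.unitsMap_def]
      have hqa : qf H g ((a : ℕ) : ZMod m)
          = if QuotientGroup.mk' H (ZMod.unitOfCoprime a ham)⁻¹ = g then 1 else 0 := by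
        rw [← ZMod.coe_unitOfCoprime a ham]
        exact qf_unit H g _
      rw [MonoidAlgebra.smul_single', mul_one, hqa, mul_ite, mul_one, mul_zero]
      simp only [MonoidAlgebra.mapDomainRingHom_apply, MonoidAlgebra.mapDomain_single,
        MonoidAlgebra.coeff_single]
      rw [Finsupp.single_apply]
      rw [hφ, MonoidHom.comp_apply, map_inv, hu]
    · rw [dif_neg h, if_neg h, _root_.map_zero]
      rfl
  rw [Finset.sum_congr rfl key]
  rw [show ((0 : MonoidAlgebra ℚ ((ZMod m)ˣ ⧸ H)).coeff g) = (0 : ℚ) from rfl]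
  -- Scalar goal
  rcases hcond with ⟨ℓ, hℓ, hℓf, hℓm, hu⟩ | hneg
  · -- Case (a)
    have hcoplm : Nat.Coprime ℓ m := hℓ.coprime_iff_not_dvd.mpr hℓm
    have hℓ0 : 0 < ℓ := hℓ.pos
    set F : ℕ → ℚ := fun a => ((a : ℚ) / f - 1 / 2) * qf H g ((a : ℕ) : ZMod m) with hF
    have hgoal : ∑ a ∈ Icc 1 f, (if Nat.Coprime a f then F a else 0) = 0 → True := fun _ => trivial
    show ∑ a ∈ Icc 1 f, (if Nat.Coprime a f then F a else 0) = 0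
    rw [sieve f hf0 F]
    set J : ℕ → ℚ := fun d => ∑ c ∈ Icc 1 m, (((c : ℕ) : ℚ) / m - 1 / 2)
        * qf H g (((d : ℕ) : ZMod m) * ((c : ℕ) : ZMod m)) with hJ
    have claim1 : ∀ d ∈ f.divisors,
        ((moebius d : ℤ) : ℚ) * ∑ b ∈ Icc 1 (f / d), F (d * b)
          = ((moebius d : ℤ) : ℚ) * J d := by
      intro d hd
      rw [Nat.mem_divisors] at hd
      have hd0 : 0 < d := Nat.pos_of_dvd_of_pos hd.1 hf0
      congr 1
      by_cases hcop : Nat.Coprime d m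
      · have hmd : m ∣ f / d := by
          have h1 : d * m ∣ f := Nat.Coprime.mul_dvd_of_dvd_of_dvd hcop hd.1 hdvd
          exact (Nat.dvd_div_iff_mul_dvd hd.1).mpr h1
        set k := (f / d) / m with hk
        have hfd : f / d = m * k := (Nat.mul_div_cancel' hmd).symm
        have hfd0 : 0 < f / d := Nat.div_pos (Nat.le_of_dvd hf0 hd.1) hd0
        have hk0 : 0 < k := by
          rcases Nat.eq_zero_or_pos k with h0 | h0
          · rw [h0, Nat.mul_zero] at hfd; omega
          · exact h0
        have hfQ2 : (f : ℚ) = (d : ℚ) * ((m : ℚ) * (k : ℚ)) := by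
          have : d * (m * k) = f := by
            rw [← hfd]
            exact Nat.mul_div_cancel' hd.1
          exact_mod_cast this.symm
        have hdQ : (d : ℚ) ≠ 0 := Nat.cast_ne_zero.mpr hd0.ne'
        have hterm : ∀ b : ℕ, F (d * b)
            = (((b : ℕ) : ℚ) / (m * k) - 1 / 2)
              * (fun x => qf H g (((d : ℕ) : ZMod m) * x)) (((b : ℕ)) : ZMod m) := by
          intro b
          show (((d * b : ℕ) : ℚ) / f - 1 / 2) * qf H g (((d * b : ℕ)) : ZMod m)
            = (((b : ℕ) : ℚ) / ((m : ℕ) * (k : ℕ)) - 1 / 2)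
              * qf H g (((d : ℕ) : ZMod m) * ((b : ℕ) : ZMod m))
          rw [Nat.cast_mul, Nat.cast_mul, hfQ2, mul_div_mul_left _ _ hdQ]
        have hdist := distrib (m := m) k hm hk0 (fun x => qf H g (((d : ℕ) : ZMod m) * x))
        rw [hfd, Finset.sum_congr rfl (fun b _ => hterm b)]
        exact hdist
      · have hqd : ∀ x : ZMod m, qf H g (((d : ℕ) : ZMod m) * x) = 0 := by
          intro x
          apply qf_nonunit
          intro hu2
          exact hcop ((ZMod.isUnit_iff_coprime d m).mp (isUnit_of_mul_isUnit_left hu2))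
        have hL : ∀ b ∈ Icc 1 (f / d), F (d * b) = 0 := by
          intro b _
          show (((d * b : ℕ) : ℚ) / f - 1 / 2) * qf H g (((d * b : ℕ)) : ZMod m) = 0
          rw [Nat.cast_mul, Nat.cast_mul, hqd, mul_zero]
        rw [Finset.sum_eq_zero hL, hJ]
        exact (Finset.sum_eq_zero (fun c _ => by rw [hqd, mul_zero])).symm
    rw [Finset.sum_congr rfl claim1]
    have Jinv : ∀ d : ℕ, J (ℓ * d) = J d := by
      intro d
      refine Finset.sum_congr rfl (fun c _ => ?_)
      congr 1
      rw [Nat.cast_mul, mul_assoc, ← ZMod.coe_unitOfCoprime ℓ hcoplm]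
      exact qf_mul_mem H g hu _
    have hmul : ∀ d : ℕ, ¬ ℓ ∣ d → moebius (ℓ * d) = - moebius d := by
      intro d hld
      have hco : Nat.Coprime ℓ d := hℓ.coprime_iff_not_dvd.mpr hld
      rw [isMultiplicative_moebius.map_mul_of_coprime hco, moebius_apply_prime hℓ]
      ring
    rw [← Finset.sum_filter_of_ne (p := fun d => Squarefree d)
      (fun x _ hne => by
        by_contra hsq
        rw [moebius_eq_zero_of_not_squarefree hsq] at hne
        simp at hne)]
    refine Finset.sum_involution (fun d _ => if ℓ ∣ d then d / ℓ else ℓ * d) ?_ ?_ ?_ ?_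
    · intro a ha
      rw [Finset.mem_filter, Nat.mem_divisors] at ha
      obtain ⟨⟨hadvd, hfne⟩, hsq⟩ := ha
      by_cases hl : ℓ ∣ a
      · simp only [if_pos hl]
        obtain ⟨e, he⟩ := hl
        have he2 : a / ℓ = e := by rw [he, Nat.mul_div_cancel_left e hℓ0]
        have hle : ¬ ℓ ∣ e := by
          intro ⟨t, ht⟩
          have h2 : ℓ * ℓ ∣ a := ⟨t, by rw [he, ht]; ring⟩
          exact hℓ.ne_one (Nat.isUnit_iff.mp (hsq ℓ h2))
        rw [he2, he, hmul e hle, Jinv e]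
        push_cast
        ring
      · simp only [if_neg hl]
        rw [hmul a hl, Jinv a]
        push_cast
        ring
    · intro a ha _
      rw [Finset.mem_filter, Nat.mem_divisors] at ha
      obtain ⟨⟨hadvd, hfne⟩, hsq⟩ := ha
      have ha0 : 0 < a := Nat.pos_of_dvd_of_pos hadvd hf0
      by_cases hl : ℓ ∣ a
      · simp only [if_pos hl]
        exact (Nat.div_lt_self ha0 hℓ.one_lt).ne
      · simp only [if_neg hl]
        intro heq
        have : ℓ * a = 1 * a := by rw [heq, one_mul]
        exact (Nat.Prime.one_lt hℓ).ne' (Nat.eq_of_mul_eq_mul_right ha0 this)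
    · intro a ha
      rw [Finset.mem_filter, Nat.mem_divisors] at ha
      obtain ⟨⟨hadvd, hfne⟩, hsq⟩ := ha
      rw [Finset.mem_filter, Nat.mem_divisors]
      by_cases hl : ℓ ∣ a
      · simp only [if_pos hl]
        exact ⟨⟨(Nat.div_dvd_of_dvd hl).trans hadvd, hfne⟩,
          hsq.squarefree_of_dvd (Nat.div_dvd_of_dvd hl)⟩
      · simp only [if_neg hl]
        have hco : Nat.Coprime ℓ a := hℓ.coprime_iff_not_dvd.mpr hl
        exact ⟨⟨Nat.Coprime.mul_dvd_of_dvd_of_dvd hco hℓf hadvd, hfne⟩,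
          (Nat.squarefree_mul hco).mpr ⟨hℓ.prime.squarefree, hsq⟩⟩
    · intro a ha
      rw [Finset.mem_filter, Nat.mem_divisors] at ha
      obtain ⟨⟨hadvd, hfne⟩, hsq⟩ := ha
      by_cases hl : ℓ ∣ a
      · simp only [if_pos hl]
        have hle : ¬ ℓ ∣ a / ℓ := by
          intro ⟨t, ht⟩
          obtain ⟨e, he⟩ := hl
          have he2 : a / ℓ = e := by rw [he, Nat.mul_div_cancel_left e hℓ0]
          rw [he2] at ht
          have h2 : ℓ * ℓ ∣ a := ⟨t, by rw [he, ht]; ring⟩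
          exact hℓ.ne_one (Nat.isUnit_iff.mp (hsq ℓ h2))
        simp only [if_neg hle]
        exact Nat.mul_div_cancel' hl
      · simp only [if_neg hl, if_pos (dvd_mul_right ℓ a)]
        exact Nat.mul_div_cancel_left a hℓ0
  · -- Case (b)
    rw [← Finset.sum_filter]
    refine Finset.sum_involution (fun a _ => f - a) ?_ ?_ ?_ ?_
    · intro a ha
      rw [Finset.mem_filter, Finset.mem_Icc] at ha
      obtain ⟨⟨ha1, haf⟩, hco⟩ := ha
      have hlt : a < f := by
        rcases Nat.lt_or_ge a f with h | h
        · exact h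
        · exfalso
          have : a = f := by omega
          rw [this] at hco
          have := hco
          rw [Nat.Coprime, Nat.gcd_self] at this
          omega
      have hcast : ((f - a : ℕ) : ZMod m) = ((-1 : (ZMod m)ˣ) : ZMod m) * ((a : ℕ) : ZMod m) := by
        have h1 : ((f : ℕ) : ZMod m) = 0 := (ZMod.natCast_eq_zero_iff f m).mpr hdvd
        rw [Nat.cast_sub hlt.le, h1, Units.val_neg, Units.val_one, neg_one_mul, zero_sub]
      have hq2 : qf H g ((f - a : ℕ) : ZMod m) = qf H g ((a : ℕ) : ZMod m) := by
        rw [hcast]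
        exact qf_mul_mem H g hneg _
      rw [hq2]
      have hQ : ((f - a : ℕ) : ℚ) = (f : ℚ) - (a : ℚ) := by
        push_cast [Nat.cast_sub hlt.le]
        ring
      rw [hQ, ← add_mul]
      have : ((a : ℚ) / f - 1 / 2) + (((f : ℚ) - a) / f - 1 / 2) = 0 := by
        field_simp
        ring
      rw [this, zero_mul]
    · intro a ha _
      rw [Finset.mem_filter, Finset.mem_Icc] at ha
      obtain ⟨⟨ha1, haf⟩, hco⟩ := ha
      intro heq
      have heq' : f - a = a := heq
      have h2a : f = 2 * a := by omega
      have hdvd2 : a ∣ f := ⟨2, by omega⟩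
      have : a ∣ 1 := by
        have := Nat.dvd_gcd (dvd_refl a) hdvd2
        rwa [hco] at this
      have ha1' : a = 1 := Nat.dvd_one.mp this
      omega
    · intro a ha
      rw [Finset.mem_filter, Finset.mem_Icc] at ha
      obtain ⟨⟨ha1, haf⟩, hco⟩ := ha
      have hlt : a < f := by
        rcases Nat.lt_or_ge a f with h | h
        · exact h
        · exfalso
          have : a = f := by omega
          rw [this] at hco
          have := hco
          rw [Nat.Coprime, Nat.gcd_self] at this
          omega
      show f - a ∈ filter (fun a => a.Coprime f) (Icc 1 f)
      rw [Finset.mem_filter, Finset.mem_Icc]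
      exact ⟨⟨by omega, by omega⟩, (Nat.coprime_self_sub_left hlt.le).mpr hco⟩
    · intro a ha
      rw [Finset.mem_filter, Finset.mem_Icc] at ha
      show f - (f - a) = a
      omega
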